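/- arXiv:1507.02257 — 2 statements merged into one kernel-verified Lean document; each statement's English description precedes it below -/
import Mathlib

section
/- If g ∈ SL(2,ℝ) acts on the real line by the Möbius map x ↦ (ax+b)/(cx+d), and x' = g·x, y' = g·y with cx+d ≠ 0 and cy+d ≠ 0, then g·C_{xy}·g⁻¹ = λ·C_{x'y'} for some nonzero real scalar λ; i.e. the correspondence (x,y) ↦ C_{xy} is SL(2,ℝ)-covariant up to scaling. -/
open Matrix

noncomputable def cycleMat (x y : ℝ) : Matrix (Fin 2) (Fin 2) ℝ :=
  !![(x + y) / 2, -(x * y); 1, -((x + y) / 2)]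

theorem cycle_covariance (a b c d x y : ℝ) (hdet : a * d - b * c = 1)
    (hx : c * x + d ≠ 0) (hy : c * y + d ≠ 0) :
    ∃ lam : ℝ, lam ≠ 0 ∧
      !![a, b; c, d] * cycleMat x y * (!![a, b; c, d])⁻¹ =
        lam • cycleMat ((a * x + b) / (c * x + d)) ((a * y + b) / (c * y + d)) := by
  refine ⟨(c * x + d) * (c * y + d), mul_ne_zero hx hy, ?_⟩
  have hinv : (!![a, b; c, d])⁻¹ = !![d, -b; -c, a] := by
    rw [Matrix.inv_def, Matrix.adjugate_fin_two, Matrix.det_fin_two_of]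
    have : a * d - b * c = 1 := hdet
    rw [show a * d - b * c = 1 from hdet]
    simp
  rw [hinv, cycleMat, cycleMat]
  ext i j
  fin_cases i <;> fin_cases j <;>
    simp [Matrix.mul_apply, Fin.sum_univ_two] <;>
    field_simp [show x * c + d ≠ 0 by rwa [mul_comm], show y * c + d ≠ 0 by rwa [mul_comm]] <;> ring_nf
end

section
/- A Möbius transformation [[a,b],[c,d]] ∈ SL(2,ℝ) mapping x_j ↦ y_j for j = 1,2,3 has a fixed point s ∈ ℝ only if s satisfies the quadratic equation s²·det[[x1,1,y1],[x2,1,y2],[x3,1,y3]] + s·det[[1,x1y1,y1-x1],[1,x2y2,y2-x2],[1,x3y3,y3-x3]] + det[[x1,-x1y1,y1],[x2,-x2y2,y2],[x3,-x3y3,y3]] = 0. -/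
open Matrix

theorem fixed_point_quadratic (a b c d x1 x2 x3 y1 y2 y3 s : ℝ)
    (hdet : a * d - b * c = 1)
    (hx12 : x1 ≠ x2) (hx23 : x2 ≠ x3) (hx13 : x1 ≠ x3)
    (hy12 : y1 ≠ y2) (hy23 : y2 ≠ y3) (hy13 : y1 ≠ y3)
    (h1 : a * x1 + b = y1 * (c * x1 + d))
    (h2 : a * x2 + b = y2 * (c * x2 + d))
    (h3 : a * x3 + b = y3 * (c * x3 + d))
    (hs : a * s + b = s * (c * s + d)) :
    s ^ 2 * (!![x1, 1, y1; x2, 1, y2; x3, 1, y3] : Matrix (Fin 3) (Fin 3) ℝ).det +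
      s * (!![1, x1 * y1, y1 - x1; 1, x2 * y2, y2 - x2; 1, x3 * y3, y3 - x3] :
            Matrix (Fin 3) (Fin 3) ℝ).det +
      (!![x1, -(x1 * y1), y1; x2, -(x2 * y2), y2; x3, -(x3 * y3), y3] :
            Matrix (Fin 3) (Fin 3) ℝ).det = 0 := by
  set M : Matrix (Fin 4) (Fin 4) ℝ :=
    !![x1, 1, -(x1 * y1), -y1;
       x2, 1, -(x2 * y2), -y2;
       x3, 1, -(x3 * y3), -y3;
       s, 1, -(s * s), -s] with hM
  have hv : ![a, b, c, d] ≠ 0 := by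
    intro h
    have ha : a = 0 := congrFun h 0
    have hb : b = 0 := congrFun h 1
    have hc : c = 0 := congrFun h 2
    have hd : d = 0 := congrFun h 3
    rw [ha, hb, hc, hd] at hdet; norm_num at hdet
  have hmv : M.mulVec ![a, b, c, d] = 0 := by
    funext i
    fin_cases i <;>
      simp [hM, Matrix.mulVec, dotProduct, Fin.sum_univ_succ] <;> linarith
  have hMdet : M.det = 0 := by
    rw [← Matrix.exists_mulVec_eq_zero_iff]
    exact ⟨![a, b, c, d], hv, hmv⟩
  have hexp : s ^ 2 * (!![x1, 1, y1; x2, 1, y2; x3, 1, y3] : Matrix (Fin 3) (Fin 3) ℝ).det +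
      s * (!![1, x1 * y1, y1 - x1; 1, x2 * y2, y2 - x2; 1, x3 * y3, y3 - x3] :
            Matrix (Fin 3) (Fin 3) ℝ).det +
      (!![x1, -(x1 * y1), y1; x2, -(x2 * y2), y2; x3, -(x3 * y3), y3] :
            Matrix (Fin 3) (Fin 3) ℝ).det = -M.det := by
    simp [hM, Matrix.det_fin_three, Matrix.det_succ_row_zero, Fin.sum_univ_succ, Matrix.vecHead, Matrix.vecTail, Fin.succAbove, Fin.castSucc, Fin.castAdd, Fin.castLE]
    ring
  rw [hexp, hMdet, neg_zero]
end
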